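/- The poset B_{1_G}(k,n) is rank-symmetric: for each integer j, the number of elements of rank j equals the number of elements of rank k(n−1) − j. -/

import Mathlib

noncomputable section
open scoped Classical
open Finset

/-- Action of a permutation on tuples: `g(x) = (x_{g⁻¹(1)},…,x_{g⁻¹(k)})`. -/
def act {k n : ℕ} (g : Equiv.Perm (Fin k)) (x : Fin k → Fin n) : Fin k → Fin n :=
  fun i => x (g⁻¹ i)

noncomputable instance lexLinearOrder {k n : ℕ} : LinearOrder (Lex (Fin k → Fin n)) :=
  @Pi.Lex.linearOrder (Fin k) (fun _ => Fin n) _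
    (inferInstance : WellFoundedLT (Fin k)) _

namespace Stmt6Aux

variable {k n : ℕ} (G : Subgroup (Equiv.Perm (Fin k)))

lemma act_one (x : Fin k → Fin n) : act 1 x = x := rfl

lemma act_mul (g h : Equiv.Perm (Fin k)) (x : Fin k → Fin n) :
    act (g * h) x = act g (act h x) := by
  funext i; simp [act, mul_inv_rev, Equiv.Perm.mul_apply]

lemma act_inv_act (g : Equiv.Perm (Fin k)) (x : Fin k → Fin n) :
    act g⁻¹ (act g x) = x := by
  rw [← act_mul, inv_mul_cancel, act_one]

def orb (x : Fin k → Fin n) : Finset (Lex (Fin k → Fin n)) :=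
  Finset.image (fun g : G => toLex (act (g : Equiv.Perm (Fin k)) x)) Finset.univ

lemma mem_orb {x : Fin k → Fin n} {y : Lex (Fin k → Fin n)} :
    y ∈ orb G x ↔ ∃ g : G, toLex (act (g : Equiv.Perm (Fin k)) x) = y := by
  simp [orb]

lemma self_mem_orb (x : Fin k → Fin n) : toLex x ∈ orb G x :=
  (mem_orb G).2 ⟨1, by simp [act_one]⟩

lemma orb_nonempty (x : Fin k → Fin n) : (orb G x).Nonempty :=
  ⟨toLex x, self_mem_orb G x⟩

lemma orb_act_eq (g : G) (x : Fin k → Fin n) :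
    orb G (act (g : Equiv.Perm (Fin k)) x) = orb G x := by
  ext y
  simp only [mem_orb]
  constructor
  · rintro ⟨h, rfl⟩
    exact ⟨h * g, by rw [Subgroup.coe_mul, act_mul]⟩
  · rintro ⟨h, rfl⟩
    refine ⟨h * g⁻¹, ?_⟩
    rw [Subgroup.coe_mul, act_mul, Subgroup.coe_inv, act_inv_act]

lemma orb_eq_of_mem {x y : Fin k → Fin n} (h : toLex y ∈ orb G x) :
    orb G y = orb G x := by
  obtain ⟨g, hg⟩ := (mem_orb G).1 h
  have : act (g : Equiv.Perm (Fin k)) x = y := toLex.injective hg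
  rw [← this, orb_act_eq]

def rep (x : Fin k → Fin n) : Fin k → Fin n :=
  ofLex ((orb G x).min' (orb_nonempty G x))

lemma toLex_rep_mem (x : Fin k → Fin n) : toLex (rep G x) ∈ orb G x :=
  (orb G x).min'_mem (orb_nonempty G x)

lemma rep_le (x : Fin k → Fin n) {y : Lex (Fin k → Fin n)} (hy : y ∈ orb G x) :
    toLex (rep G x) ≤ y :=
  (orb G x).min'_le _ hy

lemma rep_eq_of_mem {x y : Fin k → Fin n} (h : toLex y ∈ orb G x) :
    rep G y = rep G x := by
  have h2 : orb G y = orb G x := orb_eq_of_mem G h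
  simp only [rep, h2]

def cc (x : Fin k → Fin n) : Fin k → Fin n := fun i => (x i).rev

lemma cc_cc (x : Fin k → Fin n) : cc (cc x) = x :=
  funext fun _ => Fin.rev_rev _

lemma act_cc (g : Equiv.Perm (Fin k)) (x : Fin k → Fin n) :
    act g (cc x) = cc (act g x) := rfl

lemma cc_mem_orb {x y : Fin k → Fin n} (h : toLex y ∈ orb G x) :
    toLex (cc y) ∈ orb G (cc x) := by
  obtain ⟨g, hg⟩ := (mem_orb G).1 h
  refine (mem_orb G).2 ⟨g, ?_⟩
  rw [act_cc, toLex.injective hg]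

lemma sum_act (g : Equiv.Perm (Fin k)) (x : Fin k → Fin n) :
    ∑ i, ((act g x i : ℕ)) = ∑ i, ((x i : ℕ)) :=
  Equiv.sum_comp g⁻¹ (fun i => ((x i : ℕ)))

lemma sum_of_mem_orb {x y : Fin k → Fin n} (h : toLex y ∈ orb G x) :
    ∑ i, ((y i : ℕ)) = ∑ i, ((x i : ℕ)) := by
  obtain ⟨g, hg⟩ := (mem_orb G).1 h
  rw [← toLex.injective hg, sum_act]

lemma sum_cc (x : Fin k → Fin n) :
    ((∑ i, ((cc x i : ℕ)) : ℕ) : ℤ) =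
      (k : ℤ) * ((n : ℤ) - 1) - ((∑ i, ((x i : ℕ)) : ℕ) : ℤ) := by
  push_cast
  have h : ∀ i : Fin k, (((cc x i : ℕ)) : ℤ) = (n : ℤ) - 1 - ((x i : ℕ) : ℤ) := by
    intro i
    have := (x i).is_lt
    simp only [cc, Fin.val_rev]
    omega
  rw [Finset.sum_congr rfl (fun i _ => h i), Finset.sum_sub_distrib, Finset.sum_const,
    card_univ, Fintype.card_fin]
  ring

end Stmt6Aux

open Stmt6Aux in
/-- `B_{1_G}(k,n)` is rank-symmetric: for each integer `j`, the number of elements of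
rank `j` equals the number of elements of rank `k(n-1) - j`, where the rank of `x` is
`Σᵢ (xᵢ - 1)`, i.e. `Σᵢ xᵢ` for `Fin n`-valued tuples. -/
theorem stmt6 (k n : ℕ) (G : Subgroup (Equiv.Perm (Fin k)))
    (S : Finset (Fin k → Fin n))
    (hS : ∀ x, x ∈ S ↔ ∀ g : G, toLex x ≤ toLex (act (g : Equiv.Perm (Fin k)) x)) :
    ∀ j : ℤ,
      (S.filter fun x => ((∑ i, ((x i : ℕ)) : ℕ) : ℤ) = j).card =
      (S.filter fun x => ((∑ i, ((x i : ℕ)) : ℕ) : ℤ) = (k : ℤ) * ((n : ℤ) - 1) - j).card := by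
  intro j
  have hSrep : ∀ x : Fin k → Fin n, rep G x ∈ S := by
    intro x
    rw [hS]
    intro g
    refine rep_le G x ?_
    rw [← orb_eq_of_mem G (toLex_rep_mem G x)]
    exact (mem_orb G).2 ⟨g, rfl⟩
  have hrepS : ∀ x ∈ S, rep G x = x := by
    intro x hx
    have h1 : toLex (rep G x) ≤ toLex x := rep_le G x (self_mem_orb G x)
    have h2 : toLex x ≤ toLex (rep G x) := by
      obtain ⟨g, hg⟩ := (mem_orb G).1 (toLex_rep_mem G x)
      rw [← hg]; exact (hS x).1 hx g
    exact toLex.injective (le_antisymm h1 h2)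
  have key : ∀ (x : Fin k → Fin n),
      ((∑ i, ((rep G (cc x) i : ℕ)) : ℕ) : ℤ) =
        (k : ℤ) * ((n : ℤ) - 1) - ((∑ i, ((x i : ℕ)) : ℕ) : ℤ) := by
    intro x
    have h1 := sum_of_mem_orb G (toLex_rep_mem G (cc x))
    rw [h1] at *
    exact_mod_cast sum_cc x
  have inv : ∀ x ∈ S, rep G (cc (rep G (cc x))) = x := by
    intro x hx
    have h1 : toLex (cc (rep G (cc x))) ∈ orb G (cc (cc x)) :=
      cc_mem_orb G (toLex_rep_mem G (cc x))
    rw [cc_cc] at h1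
    rw [rep_eq_of_mem G h1, hrepS x hx]
  apply Finset.card_bij' (fun x _ => rep G (cc x)) (fun y _ => rep G (cc y))
  · intro a ha
    simp only [Finset.mem_filter] at ha ⊢
    exact ⟨hSrep _, by rw [key a, ha.2]⟩
  · intro a ha
    simp only [Finset.mem_filter] at ha ⊢
    refine ⟨hSrep _, ?_⟩
    rw [key a, ha.2]; ring
  · intro a ha
    exact inv a (Finset.mem_filter.1 ha).1
  · intro a ha
    exact inv a (Finset.mem_filter.1 ha).1
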